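/- Fix real parameters c₃ and c ≥ 0 with max(c, |c₃|) ≤ 1, set r = s = 0, and let C = max(c, |c₃|). Then the maximum of F over [0,1] equals (1/2)(1+C)log₂(1+C) + (1/2)(1−C)log₂(1−C); it is attained at z = 1 if c₃² ≥ c² and at z = 0 otherwise. -/

import Mathlib

/-- `H₊(z) = √(c²(1−z²)+(r+c₃z)²)`. -/
noncomputable def Hp (r c₃ c z : ℝ) : ℝ := Real.sqrt (c^2*(1 - z^2) + (r + c₃*z)^2)

/-- `H₋(z) = √(c²(1−z²)+(r−c₃z)²)`. -/
noncomputable def Hm (r c₃ c z : ℝ) : ℝ := Real.sqrt (c^2*(1 - z^2) + (r - c₃*z)^2)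

/-- The one-variable function `F(z)` from the quantum discord of X-states. -/
noncomputable def F (r s c₃ c z : ℝ) : ℝ :=
  (1/4) * (1 + s*z + Hp r c₃ c z) * Real.logb 2 ((1 + s*z + Hp r c₃ c z) / (1 + s*z)) +
  (1/4) * (1 + s*z - Hp r c₃ c z) * Real.logb 2 ((1 + s*z - Hp r c₃ c z) / (1 + s*z)) +
  (1/4) * (1 - s*z + Hm r c₃ c z) * Real.logb 2 ((1 - s*z + Hm r c₃ c z) / (1 - s*z)) +
  (1/4) * (1 - s*z - Hm r c₃ c z) * Real.logb 2 ((1 - s*z - Hm r c₃ c z) / (1 - s*z))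

noncomputable def Gaux (x : ℝ) : ℝ := (1+x)*Real.log (1+x) + (1-x)*Real.log (1-x)

noncomputable def psiAux (x : ℝ) : ℝ :=
  (1/2) * (1 + x) * Real.logb 2 (1 + x) + (1/2) * (1 - x) * Real.logb 2 (1 - x)

lemma psi_eq (x : ℝ) : psiAux x = Gaux x / (2*Real.log 2) := by
  simp only [psiAux, Gaux, Real.logb]
  ring

lemma Gaux_mono : MonotoneOn Gaux (Set.Icc (0:ℝ) 1) := by
  have hcont : ContinuousOn Gaux (Set.Icc (0:ℝ) 1) := by
    apply Continuous.continuousOn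
    exact (Real.continuous_mul_log.comp (continuous_const.add continuous_id)).add
      (Real.continuous_mul_log.comp (continuous_const.sub continuous_id))
  have hder : ∀ x ∈ Set.Ioo (0:ℝ) 1,
      HasDerivAt Gaux (Real.log (1+x) - Real.log (1-x)) x := by
    intro x hx
    have h1 : HasDerivAt (fun x : ℝ => (1+x)*Real.log (1+x)) (Real.log (1+x) + 1) x := by
      have := (Real.hasDerivAt_mul_log (by nlinarith [hx.1] : (1:ℝ)+x ≠ 0)).comp x
        ((hasDerivAt_id x).const_add 1)
      simpa [Function.comp_def] using this
    have h2 : HasDerivAt (fun x : ℝ => (1-x)*Real.log (1-x)) (-(Real.log (1-x) + 1)) x := by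
      have := (Real.hasDerivAt_mul_log (by nlinarith [hx.2] : (1:ℝ)-x ≠ 0)).comp x
        ((hasDerivAt_id x).const_sub 1)
      simpa [Function.comp_def] using this
    have := h1.add h2
    exact this.congr_deriv (by ring)
  apply monotoneOn_of_deriv_nonneg (convex_Icc 0 1) hcont
  · intro x hx
    rw [interior_Icc] at hx
    exact ((hder x hx).differentiableAt).differentiableWithinAt
  · intro x hx
    rw [interior_Icc] at hx
    rw [(hder x hx).deriv]
    have : Real.log (1-x) ≤ Real.log (1+x) :=
      Real.log_le_log (by linarith [hx.2]) (by linarith [hx.1])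
    linarith

lemma psi_mono : MonotoneOn psiAux (Set.Icc (0:ℝ) 1) := by
  intro a ha b hb hab
  rw [psi_eq, psi_eq]
  have h2 : (0:ℝ) < 2*Real.log 2 := by positivity
  have hg := Gaux_mono ha hb hab
  gcongr

lemma F_eq (c₃ c z : ℝ) :
    F 0 0 c₃ c z = psiAux (Real.sqrt (c^2*(1-z^2)+c₃^2*z^2)) := by
  have e1 : Hp 0 c₃ c z = Real.sqrt (c^2*(1-z^2)+c₃^2*z^2) := by
    unfold Hp; congr 1; ring
  have e2 : Hm 0 c₃ c z = Real.sqrt (c^2*(1-z^2)+c₃^2*z^2) := by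
    unfold Hm; congr 1; ring
  simp only [F, e1, e2, psiAux, zero_mul, add_zero, sub_zero, div_one]
  ring

theorem F_max_bell_diagonal (c₃ c : ℝ) (hc : 0 ≤ c) (hC : max c |c₃| ≤ 1) :
    (∀ z ∈ Set.Icc (0:ℝ) 1, F 0 0 c₃ c z ≤
      (1/2) * (1 + max c |c₃|) * Real.logb 2 (1 + max c |c₃|) +
      (1/2) * (1 - max c |c₃|) * Real.logb 2 (1 - max c |c₃|)) ∧
    (c^2 ≤ c₃^2 →
      F 0 0 c₃ c 1 =
        (1/2) * (1 + max c |c₃|) * Real.logb 2 (1 + max c |c₃|) +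
        (1/2) * (1 - max c |c₃|) * Real.logb 2 (1 - max c |c₃|)) ∧
    (c₃^2 < c^2 →
      F 0 0 c₃ c 0 =
        (1/2) * (1 + max c |c₃|) * Real.logb 2 (1 + max c |c₃|) +
        (1/2) * (1 - max c |c₃|) * Real.logb 2 (1 - max c |c₃|)) := by
  set C := max c |c₃| with hCdef
  have hC0 : 0 ≤ C := le_trans hc (le_max_left _ _)
  have hcC : c ≤ C := le_max_left _ _
  have hc3C : |c₃| ≤ C := le_max_right _ _
  have hRHS : (1/2) * (1 + C) * Real.logb 2 (1 + C) +
      (1/2) * (1 - C) * Real.logb 2 (1 - C) = psiAux C := by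
    simp [psiAux]
  refine ⟨?_, ?_, ?_⟩
  · intro z hz
    obtain ⟨hz0, hz1⟩ := hz
    rw [F_eq, hRHS]
    have hzz : z^2 ≤ 1 := by nlinarith
    have hH0 : 0 ≤ Real.sqrt (c^2*(1-z^2)+c₃^2*z^2) := Real.sqrt_nonneg _
    have hHC : Real.sqrt (c^2*(1-z^2)+c₃^2*z^2) ≤ C := by
      have h1 : c^2*(1-z^2)+c₃^2*z^2 ≤ C^2 := by
        have hb : c₃^2 ≤ C^2 := by nlinarith [sq_abs c₃, abs_nonneg c₃]
        have hca : c^2 ≤ C^2 := by nlinarith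
        nlinarith [mul_nonneg (sub_nonneg.2 hca) (sub_nonneg.2 hzz),
          mul_nonneg (sub_nonneg.2 hb) (sq_nonneg z)]
      calc Real.sqrt (c^2*(1-z^2)+c₃^2*z^2) ≤ Real.sqrt (C^2) := Real.sqrt_le_sqrt h1
        _ = C := Real.sqrt_sq hC0
    exact psi_mono ⟨hH0, le_trans hHC hC⟩ ⟨hC0, hC⟩ hHC
  · intro h
    have hcc3 : c ≤ |c₃| := by nlinarith [sq_abs c₃, abs_nonneg c₃]
    have hCc3 : C = |c₃| := max_eq_right hcc3
    rw [F_eq, hRHS, hCc3]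
    congr 1
    rw [show c^2*(1-1^2)+c₃^2*1^2 = c₃^2 by ring, Real.sqrt_sq_eq_abs]
  · intro h
    have hcc3 : |c₃| ≤ c := by nlinarith [sq_abs c₃, abs_nonneg c₃]
    have hCc : C = c := max_eq_left hcc3
    rw [F_eq, hRHS, hCc]
    congr 1
    rw [show c^2*(1-(0:ℝ)^2)+c₃^2*0^2 = c^2 by ring, Real.sqrt_sq hc]
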